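/- For each fixed θ ∈ ℝ, (ζ^{(r)}(rθ) + μ^{(r)}·r·θ − (1/2)·(μ^{(r)})³·(σ^{(r)})²·r²·θ²) / r² → 0 as r ↓ 0. -/

import Mathlib

open MeasureTheory


lemma nonneg_on_Ici {f f' : ℝ → ℝ} (hd : ∀ x, HasDerivAt f (f' x) x)
    (h0 : f 0 = 0) (hf' : ∀ x, 0 ≤ x → 0 ≤ f' x) {s : ℝ} (hs : 0 ≤ s) : 0 ≤ f s := by
  have hmono : MonotoneOn f (Set.Ici 0) :=
    monotoneOn_of_deriv_nonneg (convex_Ici 0)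
      (fun x _ => (hd x).continuousAt.continuousWithinAt)
      (fun x _ => (hd x).differentiableAt.differentiableWithinAt)
      (fun x hx => by
        rw [(hd x).deriv]
        exact hf' x (le_of_lt (by simpa [interior_Ici] using hx)))
  have := hmono Set.self_mem_Ici hs hs
  linarith [this, h0.symm ▸ this]

lemma exp_sub_one_le' (x : ℝ) : Real.exp x - 1 ≤ x * Real.exp x := by
  have h1 := mul_le_mul_of_nonneg_left (Real.add_one_le_exp (-x)) (Real.exp_pos x).le
  have h2 : Real.exp x * Real.exp (-x) = 1 := by rw [← Real.exp_add]; simp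
  nlinarith

lemma exp_cubic_bound (t : ℝ) :
    |Real.exp t - (1 + t + t^2/2)| ≤ |t|^3/6 * Real.exp |t| := by
  have A1 : ∀ s : ℝ, 0 ≤ s → 1 + s + s^2/2 ≤ Real.exp s := by
    intro s hs
    have := nonneg_on_Ici (f := fun x => Real.exp x - (1 + x + x^2/2))
      (f' := fun x => Real.exp x - (1 + x))
      (fun x => by
        have h := (Real.hasDerivAt_exp x).sub
          (((hasDerivAt_id' (x := x)).const_add 1).add ((hasDerivAt_pow 2 x).div_const 2))
        refine h.congr_deriv ?_
        push_cast; ring)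
      (by simp) (fun x _ => by
        have := Real.add_one_le_exp x
        show (0:ℝ) ≤ Real.exp x - (1 + x)
        linarith) hs
    simpa using this
  have hp : ∀ s : ℝ, 0 ≤ s → 0 ≤ s^2/2 * Real.exp s + 1 + s - Real.exp s := by
    intro s hs
    exact nonneg_on_Ici (f := fun x => x^2/2 * Real.exp x + 1 + x - Real.exp x)
      (f' := fun x => x * Real.exp x + x^2/2 * Real.exp x + 1 - Real.exp x)
      (fun x => by
        have h := ((((hasDerivAt_pow 2 x).div_const 2).mul (Real.hasDerivAt_exp x)).add_const 1)
        have h2 := (h.add (hasDerivAt_id' (x := x))).sub (Real.hasDerivAt_exp x)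
        refine h2.congr_deriv ?_
        push_cast; ring)
      (by simp)
      (fun x hx => by
        show (0:ℝ) ≤ x * Real.exp x + x^2/2 * Real.exp x + 1 - Real.exp x
        nlinarith [exp_sub_one_le' x, Real.exp_pos x, sq_nonneg x]) hs
  have A2 : ∀ s : ℝ, 0 ≤ s → Real.exp s ≤ 1 + s + s^2/2 + s^3/6 * Real.exp s := by
    intro s hs
    have := nonneg_on_Ici (f := fun x => x^3/6 * Real.exp x + 1 + x + x^2/2 - Real.exp x)
      (f' := fun x => x^2/2 * Real.exp x + x^3/6 * Real.exp x + 1 + x - Real.exp x)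
      (fun x => by
        have h := ((((hasDerivAt_pow 3 x).div_const 6).mul (Real.hasDerivAt_exp x)).add_const 1)
        have h2 := ((h.add (hasDerivAt_id' (x := x))).add ((hasDerivAt_pow 2 x).div_const 2)).sub (Real.hasDerivAt_exp x)
        refine h2.congr_deriv ?_
        push_cast; ring)
      (by simp)
      (fun x hx => by
        show (0:ℝ) ≤ x^2/2 * Real.exp x + x^3/6 * Real.exp x + 1 + x - Real.exp x
        linarith [hp x hx, mul_nonneg (by positivity : (0:ℝ) ≤ x^3/6) (Real.exp_pos x).le]) hs
    linarith
  have A3 : ∀ s : ℝ, 0 ≤ s → Real.exp (-s) ≤ 1 - s + s^2/2 := by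
    intro s hs
    have := nonneg_on_Ici (f := fun x => 1 - x + x^2/2 - Real.exp (-x))
      (f' := fun x => -1 + x + Real.exp (-x))
      (fun x => by
        have hne : HasDerivAt (fun y : ℝ => Real.exp (-y)) (Real.exp (-x) * (-1)) x :=
          (hasDerivAt_neg x).exp
        have h := (((hasDerivAt_id' (x := x)).const_sub 1).add ((hasDerivAt_pow 2 x).div_const 2)).sub hne
        refine h.congr_deriv ?_
        push_cast; ring)
      (by simp)
      (fun x hx => by
        show (0:ℝ) ≤ -1 + x + Real.exp (-x)
        linarith [Real.add_one_le_exp (-x)]) hs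
    linarith
  have A4 : ∀ s : ℝ, 0 ≤ s → 1 - s + s^2/2 - s^3/6 ≤ Real.exp (-s) := by
    intro s hs
    have := nonneg_on_Ici (f := fun x => x^3/6 + Real.exp (-x) - 1 + x - x^2/2)
      (f' := fun x => x^2/2 - Real.exp (-x) + 1 - x)
      (fun x => by
        have hne : HasDerivAt (fun y : ℝ => Real.exp (-y)) (Real.exp (-x) * (-1)) x :=
          (hasDerivAt_neg x).exp
        have h := (((((hasDerivAt_pow 3 x).div_const 6).add hne).sub_const 1).add (hasDerivAt_id' (x := x))).sub
          ((hasDerivAt_pow 2 x).div_const 2)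
        refine h.congr_deriv ?_
        push_cast; ring)
      (by simp)
      (fun x hx => by
        show (0:ℝ) ≤ x^2/2 - Real.exp (-x) + 1 - x
        linarith [A3 x hx]) hs
    linarith
  rcases le_or_gt 0 t with ht | ht
  · rw [abs_of_nonneg ht, abs_of_nonneg (by linarith [A1 t ht] : (0:ℝ) ≤ Real.exp t - (1 + t + t^2/2))]
    nlinarith [A2 t ht]
  · have hs : 0 ≤ -t := by linarith
    have h3 := A3 (-t) hs
    have h4 := A4 (-t) hs
    rw [neg_neg] at h3 h4
    have hup : Real.exp t - (1 + t + t^2/2) ≤ 0 := by nlinarith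
    rw [abs_of_neg ht, abs_of_nonpos hup]
    have hexp : 1 ≤ Real.exp (-t) := Real.one_le_exp hs
    have hc : (0:ℝ) ≤ (-t)^3/6 := by positivity
    nlinarith [mul_le_mul_of_nonneg_left hexp hc]


lemma aux_le_one_add_cube {x : ℝ} (hx : 0 < x) : x ≤ 1 + x^3 := by
  rcases le_or_gt x 1 with h | h
  · linarith [pow_pos hx 3]
  · have : x ≤ x^3 := le_self_pow₀ h.le (by norm_num)
    linarith
lemma aux_sq_le_one_add_cube {x : ℝ} (hx : 0 < x) : x^2 ≤ 1 + x^3 := by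
  rcases le_or_gt x 1 with h | h
  · have : x^2 ≤ 1 := pow_le_one₀ hx.le h
    linarith [pow_pos hx 3]
  · have : x^2 ≤ x^3 := pow_le_pow_right₀ h.le (by norm_num)
    linarith
lemma aux_min_facts {t r : ℝ} (ht : 0 < t) (hr : 0 < r) :
    t - min t (1/r) ≤ r^2 * t^3 ∧ t^2 - (min t (1/r))^2 ≤ r * t^3 ∧ (min t (1/r))^3 ≤ t^3 := by
  rcases le_or_gt t (1/r) with h | h
  · rw [min_eq_left h]
    refine ⟨by rw [sub_self]; positivity, by rw [sub_self]; positivity, le_refl _⟩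
  · rw [min_eq_right h.le]
    have h1 : 1 < r * t := by
      rw [div_lt_iff₀ hr] at h; linarith [mul_comm t r ▸ h]
    have hinv : 0 < 1/r := by positivity
    have hsq : 1 ≤ (r*t)^2 := one_le_pow₀ h1.le
    have k1 : t ≤ t * (r*t)^2 := le_mul_of_one_le_right ht.le hsq
    have k2 : t^2 ≤ t^2 * (r*t) := le_mul_of_one_le_right (sq_nonneg t) h1.le
    refine ⟨?_, ?_, pow_le_pow_left₀ hinv.le h.le 3⟩
    · have : t * (r*t)^2 = r^2*t^3 := by ring
      linarith [hinv.le, this ▸ k1]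
    · have : t^2 * (r*t) = r*t^3 := by ring
      have h2 : (0:ℝ) ≤ (1/r)^2 := by positivity
      linarith [this ▸ k2]

lemma aux_trap_ident (mr s r θ c w : ℝ) (hm : mr ≠ 0)
    (hw : w = (1/2) * (1/mr)^3 * s * r^2 * θ^2 + c * r^2) :
    1 - ((-(1/mr) * r * θ + (1/2) * (1/mr)^3 * s * r^2 * θ^2) + c * r^2) * mr
      + ((-(1/mr) * r * θ + (1/2) * (1/mr)^3 * s * r^2 * θ^2) + c * r^2)^2 * (s + mr^2) / 2
    = 1 + r*θ + r^2*θ^2/2 - c * mr * r^2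
      + (s + mr^2) / 2 * (w^2 - 2 * (1/mr) * r * θ * w) := by
  subst hw
  field_simp
  ring

lemma aux_rem_bound {s mr w μ θ r W B Mb : ℝ}
    (hr0 : 0 < r) (hr1 : r ≤ 1) (hw : |w| ≤ W * r^2) (hW : 0 ≤ W)
    (hμ0 : 0 ≤ μ) (hμB : μ ≤ B) (hM0 : 0 ≤ s + mr^2) (hMb : s + mr^2 ≤ Mb) :
    |(s + mr^2) / 2 * (w^2 - 2 * μ * r * θ * w)| ≤ Mb * (W^2 + 2 * B * |θ| * W) / 2 * r^3 := by
  have hwnn := abs_nonneg w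
  have htnn := abs_nonneg θ
  have hB0 : 0 ≤ B := le_trans hμ0 hμB
  have h1 : |w^2 - 2 * μ * r * θ * w| ≤ w^2 + 2 * μ * r * |θ| * |w| := by
    calc |w^2 - 2 * μ * r * θ * w| ≤ |w^2| + |2 * μ * r * θ * w| := abs_sub _ _
      _ = w^2 + 2 * μ * r * |θ| * |w| := by
          rw [abs_of_nonneg (sq_nonneg w), abs_mul, abs_mul, abs_mul, abs_mul,
            abs_of_nonneg (by norm_num : (0:ℝ) ≤ 2), abs_of_nonneg hμ0, abs_of_nonneg hr0.le]
  have h2 : w^2 ≤ W^2 * r^3 := by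
    have ha : w^2 ≤ (W*r^2)^2 := by
      rw [← sq_abs w]
      exact pow_le_pow_left₀ hwnn hw 2
    have hb : r^4 ≤ r^3 := pow_le_pow_of_le_one hr0.le hr1 (by norm_num)
    have hc : (W*r^2)^2 = W^2*r^4 := by ring
    nlinarith [sq_nonneg W]
  have h3 : 2 * μ * r * |θ| * |w| ≤ 2 * B * |θ| * W * r^3 := by
    have ha : 2 * μ * r * |θ| * |w| ≤ 2 * B * r * |θ| * (W * r^2) := by gcongr
    have hb : 2 * B * r * |θ| * (W * r^2) = 2 * B * |θ| * W * r^3 := by ring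
    linarith
  have hMb2 : (s + mr^2)/2 ≤ Mb/2 := by linarith
  have hMb0 : (0:ℝ) ≤ Mb/2 := by linarith
  calc |(s + mr^2) / 2 * (w^2 - 2 * μ * r * θ * w)|
      = (s + mr^2)/2 * |w^2 - 2 * μ * r * θ * w| := by
        rw [abs_mul, abs_of_nonneg (by linarith : (0:ℝ) ≤ (s + mr^2)/2)]
    _ ≤ Mb/2 * (W^2 * r^3 + 2 * B * |θ| * W * r^3) :=
        mul_le_mul hMb2 (by linarith) (abs_nonneg _) hMb0
    _ = Mb * (W^2 + 2 * B * |θ| * W) / 2 * r^3 := by ring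

lemma aux_zbound {μ θ r v B W : ℝ} (hr0 : 0 < r) (hr1 : r ≤ 1)
    (hμ0 : 0 ≤ μ) (hμB : μ ≤ B) (hv : |v| ≤ W * r^2) (hW : 0 ≤ W) :
    |(-μ * r * θ) + v| ≤ (B * |θ| + W) * r := by
  have htnn := abs_nonneg θ
  have e1 : μ * r * |θ| ≤ B * r * |θ| :=
    mul_le_mul_of_nonneg_right (mul_le_mul_of_nonneg_right hμB hr0.le) htnn
  have e2 : W * r * r ≤ W * r * 1 :=
    mul_le_mul_of_nonneg_left hr1 (mul_nonneg hW hr0.le)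
  calc |(-μ * r * θ) + v| ≤ |(-μ * r * θ)| + |v| := abs_add_le _ _
    _ = μ * r * |θ| + |v| := by
        rw [abs_mul, abs_mul, abs_neg, abs_of_nonneg hμ0, abs_of_nonneg hr0.le]
    _ ≤ (B * |θ| + W) * r := by nlinarith [e1, e2, hv]

lemma aux_wbound {μ s c r B S e θ : ℝ} (hr0 : 0 < r)
    (hμ0 : 0 ≤ μ) (hμB : μ ≤ B) (hs0 : 0 ≤ s) (hsS : s ≤ S) (hc : |c| ≤ e) :
    |(1/2) * μ^3 * s * r^2 * θ^2 + c * r^2| ≤ (B^3 * S * θ^2 / 2 + e) * r^2 := by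
  have hB0 : 0 ≤ B := le_trans hμ0 hμB
  have h1 : |(1/2) * μ^3 * s * r^2 * θ^2| = (1/2) * μ^3 * s * r^2 * θ^2 := by
    apply abs_of_nonneg; positivity
  have hμ3 : μ^3 ≤ B^3 := pow_le_pow_left₀ hμ0 hμB 3
  have hprod : μ^3 * s ≤ B^3 * S := mul_le_mul hμ3 hsS hs0 (by positivity)
  have h2 : (1/2) * μ^3 * s * r^2 * θ^2 ≤ B^3 * S * θ^2 / 2 * r^2 := by
    have := mul_le_mul_of_nonneg_right hprod (by positivity : (0:ℝ) ≤ r^2 * θ^2 / 2)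
    nlinarith [this]
  calc |(1/2) * μ^3 * s * r^2 * θ^2 + c * r^2|
      ≤ |(1/2) * μ^3 * s * r^2 * θ^2| + |c * r^2| := abs_add_le _ _
    _ ≤ B^3 * S * θ^2 / 2 * r^2 + e * r^2 := by
        rw [h1, abs_mul, abs_of_nonneg (sq_nonneg r)]
        have h3 : |c| * r^2 ≤ e * r^2 := mul_le_mul_of_nonneg_right hc (sq_nonneg r)
        linarith
    _ = (B^3 * S * θ^2 / 2 + e) * r^2 := by ring

lemma aux_psi_assemble {I EX EX2 EX3 z mr M K C r : ℝ}
    (h1 : |I - (1 - z*EX + z^2*EX2/2)| ≤ Real.exp K * |z|^3 * EX3 / 6)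
    (hz : |z| ≤ K*r) (hK : 0 ≤ K) (hr0 : 0 < r) (hC : 0 ≤ C)
    (hEX : |EX - mr| ≤ C*r^2) (hEX2 : |EX2 - M| ≤ C*r) (hEX3 : 0 ≤ EX3) (hEX3C : EX3 ≤ C) :
    |I - (1 - z*mr + z^2*M/2)| ≤ (Real.exp K * K^3 * C / 6 + K*C + K^2*C/2) * r^3 := by
  have hzn := abs_nonneg z
  have hKr : 0 ≤ K * r := by positivity
  have e1 : Real.exp K * |z|^3 * EX3 / 6 ≤ Real.exp K * (K*r)^3 * C / 6 := by
    have h3 : |z|^3 ≤ (K*r)^3 := pow_le_pow_left₀ hzn hz 3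
    have h4 : Real.exp K * |z|^3 * EX3 ≤ Real.exp K * (K*r)^3 * C :=
      mul_le_mul (mul_le_mul_of_nonneg_left h3 (Real.exp_pos K).le) hEX3C hEX3 (by positivity)
    linarith
  have e2 : |z| * |EX - mr| ≤ (K*r) * (C*r^2) :=
    mul_le_mul hz hEX (abs_nonneg _) hKr
  have hz2 : z^2 ≤ (K*r)^2 := by
    rw [← sq_abs z]; exact pow_le_pow_left₀ hzn hz 2
  have e3 : z^2/2 * |EX2 - M| ≤ (K*r)^2/2 * (C*r) :=
    mul_le_mul (by linarith) hEX2 (abs_nonneg _) (by positivity)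
  have tri : |I - (1 - z*mr + z^2*M/2)| ≤ |I - (1 - z*EX + z^2*EX2/2)|
      + |z| * |EX - mr| + z^2/2 * |EX2 - M| := by
    have hid : I - (1 - z*mr + z^2*M/2)
        = (I - (1 - z*EX + z^2*EX2/2)) + (-(z*(EX - mr)) + z^2*(EX2 - M)/2) := by ring
    rw [hid]
    have hq : |z^2*(EX2 - M)/2| = z^2/2 * |EX2 - M| := by
      rw [abs_div, abs_mul, abs_pow, sq_abs, abs_two]
      ring
    calc |(I - (1 - z*EX + z^2*EX2/2)) + (-(z*(EX - mr)) + z^2*(EX2 - M)/2)|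
        ≤ |I - (1 - z*EX + z^2*EX2/2)| + |(-(z*(EX - mr)) + z^2*(EX2 - M)/2)| := abs_add_le _ _
      _ ≤ |I - (1 - z*EX + z^2*EX2/2)| + (|z*(EX - mr)| + |z^2*(EX2 - M)/2|) := by
          linarith [abs_add_le (-(z*(EX - mr))) (z^2*(EX2 - M)/2), abs_neg (z*(EX - mr))]
      _ = |I - (1 - z*EX + z^2*EX2/2)| + |z| * |EX - mr| + z^2/2 * |EX2 - M| := by
          rw [abs_mul, hq]; ring
  have final : Real.exp K * (K*r)^3 * C / 6 + (K*r) * (C*r^2) + (K*r)^2/2 * (C*r)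
      = (Real.exp K * K^3 * C / 6 + K*C + K^2*C/2) * r^3 := by ring
  linarith


set_option maxHeartbeats 1000000

theorem stmt2 {Ω : Type*} [MeasurableSpace Ω]
    (P : ℝ → Measure Ω) (hP : ∀ r ∈ Set.Ioc (0:ℝ) 1, IsProbabilityMeasure (P r))
    (T : ℝ → Ω → ℝ) (hmeas : ∀ r ∈ Set.Ioc (0:ℝ) 1, Measurable (T r))
    (hTpos : ∀ r ∈ Set.Ioc (0:ℝ) 1, ∀ᵐ ω ∂(P r), 0 < T r ω)
    (hint3 : ∀ r ∈ Set.Ioc (0:ℝ) 1, Integrable (fun ω => (T r ω)^3) (P r))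
    (hbd3 : ∃ C : ℝ, ∀ r ∈ Set.Ioc (0:ℝ) 1, ∫ ω, (T r ω)^3 ∂(P r) ≤ C)
    (m σ2 : ℝ → ℝ)
    (hm : ∀ r ∈ Set.Ioc (0:ℝ) 1, m r = ∫ ω, T r ω ∂(P r))
    (hmpos : ∀ r ∈ Set.Ioc (0:ℝ) 1, 0 < m r)
    (hσ2 : ∀ r ∈ Set.Ioc (0:ℝ) 1, σ2 r = ∫ ω, (T r ω - m r)^2 ∂(P r))
    (m0 σ0 : ℝ) (hm0 : 0 < m0) (hσ0 : 0 < σ0)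
    (hmlim : Filter.Tendsto m (nhdsWithin 0 (Set.Ioi 0)) (nhds m0))
    (hσlim : Filter.Tendsto σ2 (nhdsWithin 0 (Set.Ioi 0)) (nhds σ0))
    (ζ : ℝ → ℝ → ℝ)
    (hζ : ∀ r ∈ Set.Ioc (0:ℝ) 1, ∀ θ : ℝ,
      Real.exp (-θ) * ∫ ω, Real.exp (-(ζ r θ) * min (T r ω) (1/r)) ∂(P r) = 1)
    (θ : ℝ) :
    Filter.Tendsto
      (fun r => (ζ r (r * θ) + (1 / m r) * r * θ
          - (1/2) * (1 / m r)^3 * σ2 r * r^2 * θ^2) / r^2)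
      (nhdsWithin 0 (Set.Ioi 0)) (nhds 0) := by
  rw [NormedAddCommGroup.tendsto_nhds_zero]
  intro ε hε
  obtain ⟨C₀, hC₀⟩ := hbd3
  set C : ℝ := max C₀ 0 with hCdef
  have hC : ∀ r ∈ Set.Ioc (0:ℝ) 1, ∫ ω, (T r ω)^3 ∂(P r) ≤ C :=
    fun r hr => (hC₀ r hr).trans (le_max_left _ _)
  have hCnn : (0:ℝ) ≤ C := le_max_right _ _
  set B : ℝ := 2 / m0 with hBdef
  set S : ℝ := 2 * σ0 with hSdef
  set W : ℝ := B^3 * S * θ^2 / 2 + ε with hWdef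
  set K : ℝ := B * |θ| + W with hKdef
  set C₁ : ℝ := Real.exp K * K^3 * C / 6 + K * C + K^2 * C / 2 with hC₁def
  set C₂ : ℝ := (S + 4 * m0^2) * (W^2 + 2 * B * |θ| * W) / 2 with hC₂def
  set C₃ : ℝ := C₁ + C₂ + Real.exp |θ| * |θ|^3 / 6 + 1 with hC₃def
  have hBpos : 0 < B := by positivity
  have hSpos : 0 < S := by positivity
  have hWpos : 0 < W := by positivity
  have hKpos : 0 < K := by positivity
  have hC₁nn : 0 ≤ C₁ := by positivity
  have hC₂nn : 0 ≤ C₂ := by positivity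
  have hC₃pos : 0 < C₃ := by positivity
  have hev : ∀ᶠ r in nhdsWithin (0:ℝ) (Set.Ioi 0),
      ((r ∈ Set.Ioc (0:ℝ) 1 ∧ r < ε * m0 / (2 * C₃)) ∧ |m r - m0| < m0/2 ∧ |σ2 r - σ0| < σ0) := by
    have h1 : ∀ᶠ r in nhdsWithin (0:ℝ) (Set.Ioi 0), r ∈ Set.Ioi (0:ℝ) :=
      eventually_mem_nhdsWithin
    have h2 : ∀ᶠ r in nhdsWithin (0:ℝ) (Set.Ioi 0), r < 1 :=
      (eventually_lt_nhds (by norm_num)).filter_mono nhdsWithin_le_nhds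
    have h3 : ∀ᶠ r in nhdsWithin (0:ℝ) (Set.Ioi 0), r < ε * m0 / (2 * C₃) :=
      (eventually_lt_nhds (by positivity)).filter_mono nhdsWithin_le_nhds
    have h4 : ∀ᶠ r in nhdsWithin (0:ℝ) (Set.Ioi 0), |m r - m0| < m0/2 := by
      have := Metric.tendsto_nhds.mp hmlim (m0/2) (by positivity)
      simpa [Real.dist_eq] using this
    have h5 : ∀ᶠ r in nhdsWithin (0:ℝ) (Set.Ioi 0), |σ2 r - σ0| < σ0 := by
      have := Metric.tendsto_nhds.mp hσlim σ0 hσ0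
      simpa [Real.dist_eq] using this
    filter_upwards [h1, h2, h3, h4, h5] with r hr1 hr2 hr3 hr4 hr5
    exact ⟨⟨⟨hr1, hr2.le⟩, hr3⟩, hr4, hr5⟩
  clear_value C B S W K C₁ C₂ C₃
  filter_upwards [hev] with r hgood
  obtain ⟨⟨hrIoc', hrδ⟩, hmr, hsr⟩ := hgood
  obtain ⟨hr0, hr1⟩ := hrIoc'
  have hrIoc : r ∈ Set.Ioc (0:ℝ) 1 := ⟨hr0, hr1⟩
  haveI hPr : IsProbabilityMeasure (P r) := hP r hrIoc
  have hmr_lo : m0/2 < m r := by have := abs_lt.mp hmr; linarith [this.1]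
  have hmr_hi : m r < 2*m0 := by have := abs_lt.mp hmr; linarith [this.2]
  have hmrpos : 0 < m r := lt_trans (by positivity) hmr_lo
  have hs_lo : 0 < σ2 r := by have := abs_lt.mp hsr; linarith [this.1]
  have hs_hi : σ2 r < S := by have := abs_lt.mp hsr; rw [hSdef]; linarith [this.2]
  have hμpos : 0 < 1 / m r := by positivity
  have hμB : 1 / m r < B := by
    rw [hBdef, div_lt_div_iff₀ hmrpos hm0]
    linarith
  have hTmeas := hmeas r hrIoc
  have hTpos' := hTpos r hrIoc
  have hT3 := hint3 r hrIoc
  have hT3bd := hC r hrIoc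
  have hXmeas : Measurable fun ω => min (T r ω) (1/r) := hTmeas.min measurable_const
  have hT1 : Integrable (T r) (P r) := by
    refine ((integrable_const (1:ℝ)).add hT3).mono' hTmeas.aestronglyMeasurable ?_
    filter_upwards [hTpos'] with ω hω
    rw [Real.norm_eq_abs, abs_of_pos hω]
    exact aux_le_one_add_cube hω
  have hT2 : Integrable (fun ω => (T r ω)^2) (P r) := by
    refine ((integrable_const (1:ℝ)).add hT3).mono' (hTmeas.pow_const 2).aestronglyMeasurable ?_
    filter_upwards [hTpos'] with ω hω
    rw [Real.norm_eq_abs, abs_of_pos (by positivity)]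
    exact aux_sq_le_one_add_cube hω
  have hXpos : ∀ᵐ ω ∂(P r), 0 < min (T r ω) (1/r) := by
    filter_upwards [hTpos'] with ω hω
    exact lt_min hω (by positivity)
  have hXub : ∀ ω, min (T r ω) (1/r) ≤ 1/r := fun ω => min_le_right _ _
  have hXle : ∀ ω, min (T r ω) (1/r) ≤ T r ω := fun ω => min_le_left _ _
  have hXint : ∀ n : ℕ, Integrable (fun ω => (min (T r ω) (1/r))^n) (P r) := by
    intro n
    refine (integrable_const ((1/r)^n)).mono' ((hXmeas.pow_const n).aestronglyMeasurable) ?_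
    filter_upwards [hXpos] with ω hω
    rw [Real.norm_eq_abs, abs_of_pos (by positivity)]
    exact pow_le_pow_left₀ hω.le (hXub ω) n
  have hX1 : Integrable (fun ω => min (T r ω) (1/r)) (P r) := by
    simpa using hXint 1
  have hintexp : ∀ z : ℝ, Integrable (fun ω => Real.exp (-z * min (T r ω) (1/r))) (P r) := by
    intro z
    refine (integrable_const (Real.exp (|z| * (1/r)))).mono'
      ((hXmeas.const_mul (-z)).exp.aestronglyMeasurable) ?_
    filter_upwards [hXpos] with ω hω
    rw [Real.norm_eq_abs, abs_of_pos (Real.exp_pos _), Real.exp_le_exp]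
    calc -z * min (T r ω) (1/r) ≤ |z| * min (T r ω) (1/r) :=
          mul_le_mul_of_nonneg_right (neg_le_abs z) hω.le
      _ ≤ |z| * (1/r) := mul_le_mul_of_nonneg_left (hXub ω) (abs_nonneg z)
  -- moment estimates
  have hEX_ub : ∫ ω, min (T r ω) (1/r) ∂(P r) ≤ m r := by
    rw [hm r hrIoc]
    exact integral_mono_ae hX1 hT1 (Filter.Eventually.of_forall hXle)
  have hEX_lb : m r - C * r^2 ≤ ∫ ω, min (T r ω) (1/r) ∂(P r) := by
    have hint : Integrable (fun ω => T r ω - min (T r ω) (1/r)) (P r) := hT1.sub hX1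
    have hintc : Integrable (fun ω => r^2 * (T r ω)^3) (P r) := hT3.const_mul _
    have hb : ∀ᵐ ω ∂(P r), T r ω - min (T r ω) (1/r) ≤ r^2 * (T r ω)^3 := by
      filter_upwards [hTpos'] with ω hω
      exact (aux_min_facts hω hr0).1
    have hdiff : ∫ ω, (T r ω - min (T r ω) (1/r)) ∂(P r) ≤ C * r^2 := by
      calc ∫ ω, (T r ω - min (T r ω) (1/r)) ∂(P r)
          ≤ ∫ ω, r^2 * (T r ω)^3 ∂(P r) := integral_mono_ae hint hintc hb
        _ = r^2 * ∫ ω, (T r ω)^3 ∂(P r) := integral_const_mul _ _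
        _ ≤ r^2 * C := mul_le_mul_of_nonneg_left hT3bd (sq_nonneg r)
        _ = C * r^2 := by ring
    rw [integral_sub hT1 hX1] at hdiff
    have hmeq := hm r hrIoc
    linarith only [hdiff, hmeq]
  have hTsq : ∫ ω, (T r ω)^2 ∂(P r) = σ2 r + (m r)^2 := by
    have hexp2 : (fun ω => (T r ω - m r)^2)
        = fun ω => ((T r ω)^2 - (2 * m r) * T r ω) + (m r)^2 := by
      funext ω; ring
    have h1 : σ2 r = ∫ ω, (((T r ω)^2 - (2 * m r) * T r ω) + (m r)^2) ∂(P r) := by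
      rw [hσ2 r hrIoc, hexp2]
    have hi0 : Integrable (fun ω => (2 * m r) * T r ω) (P r) := hT1.const_mul (2 * m r)
    have hisub : Integrable (fun ω => (T r ω)^2 - (2 * m r) * T r ω) (P r) := hT2.sub hi0
    rw [integral_add hisub (integrable_const ((m r)^2)),
      integral_sub hT2 hi0, integral_const_mul, integral_const] at h1
    simp only [measure_univ, ENNReal.toReal_one, smul_eq_mul, one_mul, probReal_univ] at h1
    rw [← hm r hrIoc] at h1
    linear_combination -h1
  have hEX2_ub : ∫ ω, (min (T r ω) (1/r))^2 ∂(P r) ≤ σ2 r + (m r)^2 := by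
    rw [← hTsq]
    refine integral_mono_ae (hXint 2) hT2 ?_
    filter_upwards [hXpos] with ω hω
    exact pow_le_pow_left₀ hω.le (hXle ω) 2
  have hEX2_lb : σ2 r + (m r)^2 - C * r ≤ ∫ ω, (min (T r ω) (1/r))^2 ∂(P r) := by
    have hint : Integrable (fun ω => (T r ω)^2 - (min (T r ω) (1/r))^2) (P r) :=
      hT2.sub (hXint 2)
    have hintc : Integrable (fun ω => r * (T r ω)^3) (P r) := hT3.const_mul _
    have hb : ∀ᵐ ω ∂(P r), (T r ω)^2 - (min (T r ω) (1/r))^2 ≤ r * (T r ω)^3 := by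
      filter_upwards [hTpos'] with ω hω
      exact (aux_min_facts hω hr0).2.1
    have hdiff : ∫ ω, ((T r ω)^2 - (min (T r ω) (1/r))^2) ∂(P r) ≤ C * r := by
      calc ∫ ω, ((T r ω)^2 - (min (T r ω) (1/r))^2) ∂(P r)
          ≤ ∫ ω, r * (T r ω)^3 ∂(P r) := integral_mono_ae hint hintc hb
        _ = r * ∫ ω, (T r ω)^3 ∂(P r) := integral_const_mul _ _
        _ ≤ r * C := mul_le_mul_of_nonneg_left hT3bd hr0.le
        _ = C * r := by ring
    rw [integral_sub hT2 (hXint 2), hTsq] at hdiff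
    linarith only [hdiff]
  have hEX3 : ∫ ω, (min (T r ω) (1/r))^3 ∂(P r) ≤ C := by
    refine le_trans (integral_mono_ae (hXint 3) hT3 ?_) hT3bd
    filter_upwards [hTpos'] with ω hω
    exact (aux_min_facts hω hr0).2.2
  have hEX3nn : 0 ≤ ∫ ω, (min (T r ω) (1/r))^3 ∂(P r) := by
    refine integral_nonneg_of_ae ?_
    filter_upwards [hXpos] with ω hω
    positivity
  -- expansion of ψ
  have hΨ : ∀ z : ℝ, |z| ≤ K * r →
      |(∫ ω, Real.exp (-z * min (T r ω) (1/r)) ∂(P r))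
        - (1 - z * m r + z^2 * (σ2 r + (m r)^2) / 2)| ≤ C₁ * r^3 := by
    intro z hz
    have hquad : Integrable (fun ω => 1 - z * min (T r ω) (1/r)
        + z^2 * (min (T r ω) (1/r))^2 / 2) (P r) :=
      ((integrable_const (1:ℝ)).sub (hX1.const_mul z)).add
        (((hXint 2).const_mul (z^2)).div_const 2)
    have hpt : ∀ᵐ ω ∂(P r), |Real.exp (-z * min (T r ω) (1/r))
        - (1 - z * min (T r ω) (1/r) + z^2 * (min (T r ω) (1/r))^2 / 2)|
        ≤ Real.exp K * |z|^3 / 6 * (min (T r ω) (1/r))^3 := by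
      filter_upwards [hXpos] with ω hω
      have hb := exp_cubic_bound (-z * min (T r ω) (1/r))
      have habs : |(-z * min (T r ω) (1/r))| = |z| * min (T r ω) (1/r) := by
        rw [abs_mul, abs_neg, abs_of_pos hω]
      have hle : |z| * min (T r ω) (1/r) ≤ K := by
        have h1 : |z| * min (T r ω) (1/r) ≤ (K * r) * (1/r) :=
          mul_le_mul hz (hXub ω) hω.le (by positivity)
        have h2 : (K * r) * (1/r) = K := by field_simp
        linarith only [h1, h2]
      have h2 : (1 + (-z * min (T r ω) (1/r)) + (-z * min (T r ω) (1/r))^2/2)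
          = 1 - z * min (T r ω) (1/r) + z^2 * (min (T r ω) (1/r))^2 / 2 := by ring
      rw [h2, habs] at hb
      have h3 : (|z| * min (T r ω) (1/r))^3/6 * Real.exp (|z| * min (T r ω) (1/r))
          ≤ Real.exp K * |z|^3 / 6 * (min (T r ω) (1/r))^3 := by
        have hexpmono : Real.exp (|z| * min (T r ω) (1/r)) ≤ Real.exp K :=
          Real.exp_le_exp.mpr hle
        calc (|z| * min (T r ω) (1/r))^3/6 * Real.exp (|z| * min (T r ω) (1/r))
            ≤ (|z| * min (T r ω) (1/r))^3/6 * Real.exp K := by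
              apply mul_le_mul_of_nonneg_left hexpmono
              positivity
          _ = Real.exp K * |z|^3 / 6 * (min (T r ω) (1/r))^3 := by ring
      exact le_trans hb h3
    have h4 : |(∫ ω, Real.exp (-z * min (T r ω) (1/r)) ∂(P r))
        - ∫ ω, (1 - z * min (T r ω) (1/r) + z^2 * (min (T r ω) (1/r))^2/2) ∂(P r)|
        ≤ Real.exp K * |z|^3 * (∫ ω, (min (T r ω) (1/r))^3 ∂(P r)) / 6 := by
      rw [← integral_sub (hintexp z) hquad]
      have step1 : |∫ ω, (Real.exp (-z * min (T r ω) (1/r))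
          - (1 - z * min (T r ω) (1/r) + z^2 * (min (T r ω) (1/r))^2/2)) ∂(P r)|
          ≤ ∫ ω, |Real.exp (-z * min (T r ω) (1/r))
          - (1 - z * min (T r ω) (1/r) + z^2 * (min (T r ω) (1/r))^2/2)| ∂(P r) := by
        exact norm_integral_le_integral_norm
          (fun ω => Real.exp (-z * min (T r ω) (1/r))
            - (1 - z * min (T r ω) (1/r) + z^2 * (min (T r ω) (1/r))^2/2)) (μ := P r)
      have step2 : ∫ ω, |Real.exp (-z * min (T r ω) (1/r))
          - (1 - z * min (T r ω) (1/r) + z^2 * (min (T r ω) (1/r))^2/2)| ∂(P r)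
          ≤ ∫ ω, (Real.exp K * |z|^3 / 6 * (min (T r ω) (1/r))^3) ∂(P r) :=
        integral_mono_ae ((hintexp z).sub hquad).abs ((hXint 3).const_mul _) hpt
      have step3 : ∫ ω, (Real.exp K * |z|^3 / 6 * (min (T r ω) (1/r))^3) ∂(P r)
          = Real.exp K * |z|^3 / 6 * ∫ ω, (min (T r ω) (1/r))^3 ∂(P r) :=
        integral_const_mul _ _
      have heq : Real.exp K * |z|^3 / 6 * (∫ ω, (min (T r ω) (1/r))^3 ∂(P r))
          = Real.exp K * |z|^3 * (∫ ω, (min (T r ω) (1/r))^3 ∂(P r)) / 6 := by ring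
      linarith only [step1, step2, step3, heq]
    have hquadval : ∫ ω, (1 - z * min (T r ω) (1/r) + z^2 * (min (T r ω) (1/r))^2/2) ∂(P r)
        = 1 - z * (∫ ω, min (T r ω) (1/r) ∂(P r))
          + z^2 * (∫ ω, (min (T r ω) (1/r))^2 ∂(P r))/2 := by
      have hj0 : Integrable (fun ω => z * min (T r ω) (1/r)) (P r) := hX1.const_mul z
      have hj1 : Integrable (fun ω => 1 - z * min (T r ω) (1/r)) (P r) :=
        (integrable_const (1:ℝ)).sub hj0
      have hj2 : Integrable (fun ω => z^2 * (min (T r ω) (1/r))^2 / 2) (P r) :=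
        ((hXint 2).const_mul (z^2)).div_const 2
      rw [integral_add hj1 hj2, integral_sub (integrable_const (1:ℝ)) hj0,
        integral_div, integral_const_mul, integral_const_mul, integral_const]
      simp [measure_univ]
    rw [hquadval] at h4
    have hCr2 : (0:ℝ) ≤ C * r^2 := by positivity
    have hCr1 : (0:ℝ) ≤ C * r := by positivity
    have hEXabs : |(∫ ω, min (T r ω) (1/r) ∂(P r)) - m r| ≤ C * r^2 :=
      abs_le.mpr ⟨by linarith only [hEX_lb], by linarith only [hEX_ub, hCr2]⟩
    have hEX2abs : |(∫ ω, (min (T r ω) (1/r))^2 ∂(P r)) - (σ2 r + (m r)^2)| ≤ C * r :=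
      abs_le.mpr ⟨by linarith only [hEX2_lb], by linarith only [hEX2_ub, hCr1]⟩
    rw [hC₁def]
    exact aux_psi_assemble h4 hz hKpos.le hr0 hCnn hEXabs hEX2abs hEX3nn hEX3
  -- monotonicity of ψ
  have hmono : ∀ a b : ℝ, a ≤ b →
      (∫ ω, Real.exp (-b * min (T r ω) (1/r)) ∂(P r))
        ≤ ∫ ω, Real.exp (-a * min (T r ω) (1/r)) ∂(P r) := by
    intro a b hab
    refine integral_mono_ae (hintexp b) (hintexp a) ?_
    filter_upwards [hXpos] with ω hω
    rw [Real.exp_le_exp]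
    have hh := mul_le_mul_of_nonneg_right hab hω.le
    linarith only [hh]
  -- the defining equation
  have hζeq : (∫ ω, Real.exp (-(ζ r (r*θ)) * min (T r ω) (1/r)) ∂(P r)) = Real.exp (r*θ) := by
    have h := hζ r hrIoc (r*θ)
    have h2 : Real.exp (r*θ) * (Real.exp (-(r*θ))
        * ∫ ω, Real.exp (-(ζ r (r*θ)) * min (T r ω) (1/r)) ∂(P r)) = Real.exp (r*θ) := by
      rw [h, mul_one]
    rwa [← mul_assoc, ← Real.exp_add, add_neg_cancel, Real.exp_zero, one_mul] at h2
  -- exp bounds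
  have hexpb := exp_cubic_bound (r*θ)
  have hexpb2 : |r*θ|^3/6 * Real.exp |r*θ| ≤ Real.exp |θ| * |θ|^3/6 * r^3 := by
    rw [abs_mul, abs_of_pos hr0]
    have hrθ : r * |θ| ≤ |θ| := mul_le_of_le_one_left (abs_nonneg θ) hr1
    calc (r*|θ|)^3/6 * Real.exp (r*|θ|) ≤ (r*|θ|)^3/6 * Real.exp |θ| := by
          apply mul_le_mul_of_nonneg_left (Real.exp_le_exp.mpr hrθ)
          positivity
      _ = Real.exp |θ| * |θ|^3/6 * r^3 := by ring
  have hexp_ub : Real.exp (r*θ) ≤ 1 + r*θ + r^2*θ^2/2 + Real.exp |θ| * |θ|^3/6 * r^3 := by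
    have h := (abs_le.mp hexpb).2
    linarith only [h, hexpb2]
  have hexp_lb : 1 + r*θ + r^2*θ^2/2 - Real.exp |θ| * |θ|^3/6 * r^3 ≤ Real.exp (r*θ) := by
    have h := (abs_le.mp hexpb).1
    linarith only [h, hexpb2]
  -- trap estimates
  set z0 : ℝ := -(1 / m r) * r * θ + (1/2) * (1 / m r)^3 * σ2 r * r^2 * θ^2 with hz0def
  have htrap : ∀ c : ℝ, |c| ≤ ε →
      |z0 + c * r^2| ≤ K * r ∧
      |(1 - (z0 + c*r^2) * m r + (z0 + c*r^2)^2 * (σ2 r + (m r)^2) / 2)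
        - (1 + r*θ + r^2*θ^2/2 - c * m r * r^2)| ≤ C₂ * r^3 := by
    intro c hc
    have hwb : |(1/2) * (1/m r)^3 * σ2 r * r^2 * θ^2 + c * r^2| ≤ W * r^2 := by
      rw [hWdef]
      exact aux_wbound hr0 hμpos.le hμB.le hs_lo.le hs_hi.le hc
    constructor
    · have heq : z0 + c * r^2
          = (-(1/m r) * r * θ) + ((1/2) * (1/m r)^3 * σ2 r * r^2 * θ^2 + c * r^2) := by
        rw [hz0def]; ring
      rw [heq, hKdef]
      exact aux_zbound hr0 hr1 hμpos.le hμB.le hwb hWpos.le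
    · have hident := aux_trap_ident (m r) (σ2 r) r θ c
        ((1/2) * (1/m r)^3 * σ2 r * r^2 * θ^2 + c * r^2) hmrpos.ne' rfl
      have heq2 : (1 - (z0 + c*r^2) * m r + (z0 + c*r^2)^2 * (σ2 r + (m r)^2) / 2)
          - (1 + r*θ + r^2*θ^2/2 - c * m r * r^2)
          = (σ2 r + (m r)^2)/2 * (((1/2) * (1/m r)^3 * σ2 r * r^2 * θ^2 + c * r^2)^2
            - 2*(1/m r)*r*θ*((1/2) * (1/m r)^3 * σ2 r * r^2 * θ^2 + c * r^2)) := by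
        rw [hz0def]
        linear_combination hident
      rw [heq2, hC₂def]
      have hm2 : (m r)^2 ≤ (2*m0)^2 := pow_le_pow_left₀ hmrpos.le hmr_hi.le 2
      have hm2' : (2*m0)^2 = 4*m0^2 := by ring
      have hMb : σ2 r + (m r)^2 ≤ S + 4*m0^2 := by linarith only [hm2, hm2', hs_hi]
      exact aux_rem_bound hr0 hr1 hwb hWpos.le hμpos.le hμB.le (by positivity) hMb
  have hsmall : C₃ * r^3 < ε * m r * r^2 := by
    have h1 : r * (2 * C₃) < ε * m0 :=
      (lt_div_iff₀ (by linarith only [hC₃pos] : (0:ℝ) < 2 * C₃)).mp hrδ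
    have h3 : (C₃ * r) * r^2 < (ε * m0/2) * r^2 :=
      mul_lt_mul_of_pos_right (by linarith only [h1]) (by positivity)
    have h4 : (ε * m0/2) * r^2 ≤ ε * m r * r^2 := by
      apply mul_le_mul_of_nonneg_right ?_ (sq_nonneg r)
      linarith only [mul_le_mul_of_nonneg_left (le_of_lt hmr_lo) hε.le]
    calc C₃ * r^3 = (C₃*r)*r^2 := by ring
      _ < (ε * m0/2)*r^2 := h3
      _ ≤ ε * m r * r^2 := h4
  have hr3 : (0:ℝ) < r^3 := by positivity
  have hεm : C₃ * r^3 < ε * m r * r^2 := hsmall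
  rw [hC₃def] at hεm
  -- upper trap
  have hup : ζ r (r*θ) < z0 + ε * r^2 := by
    obtain ⟨hK1, hA1⟩ := htrap ε (le_of_eq (abs_of_pos hε))
    by_contra hcon
    push_neg at hcon
    have hmono' := hmono (z0 + ε*r^2) (ζ r (r*θ)) hcon
    rw [hζeq] at hmono'
    have hΨ1 := hΨ (z0 + ε*r^2) hK1
    have hb1 := (abs_le.mp hΨ1).2
    have hb2 := (abs_le.mp hA1).2
    linarith only [hb1, hb2, hexp_lb, hmono', hεm, hr3]
  -- lower trap
  have hlo : z0 - ε * r^2 < ζ r (r*θ) := by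
    obtain ⟨hK1, hA1⟩ := htrap (-ε) (by rw [abs_neg, abs_of_pos hε])
    by_contra hcon
    push_neg at hcon
    have hcon' : ζ r (r*θ) ≤ z0 + (-ε) * r^2 := by linarith
    have hmono' := hmono (ζ r (r*θ)) (z0 + (-ε)*r^2) hcon'
    rw [hζeq] at hmono'
    have hΨ1 := hΨ (z0 + (-ε)*r^2) hK1
    have hb1 := (abs_le.mp hΨ1).1
    have hb2 := (abs_le.mp hA1).1
    linarith only [hb1, hb2, hexp_ub, hmono', hεm, hr3]
  -- conclusion
  rw [Real.norm_eq_abs]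
  have hrewrite : (ζ r (r * θ) + (1 / m r) * r * θ
      - (1/2) * (1 / m r)^3 * σ2 r * r^2 * θ^2) / r^2 = (ζ r (r*θ) - z0) / r^2 := by
    rw [hz0def]; ring
  rw [hrewrite, abs_div, abs_of_pos (by positivity : (0:ℝ) < r^2),
    div_lt_iff₀ (by positivity : (0:ℝ) < r^2)]
  rw [abs_lt]
  constructor
  · linarith only [hlo]
  · linarith only [hup]
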